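/- For any f with f_min ≤ f ≤ f_max, the seed defined by s_n = n·((q + 1 + f - P + r)/P + 1) for n ∈ {0,…,P-1} satisfies: every f-th order gap g_n^{(f)} equals f·(w + r)/P where w = q + 1 + f - P, and hence 0 ≤ g_n^{(f)} < 1 for all n. -/

import Mathlib

/-- First-order gaps of a seed `s` with `P` threads, parameters `q`, `r`, `f`. -/
noncomputable def gap1 (P q f : ℕ) (r : ℝ) (s : ℕ → ℝ) (n : ℕ) : ℝ :=
  if n = 0 then s 0 + (q : ℝ) + r + (f : ℝ) - s (P - 1) else s n - s (n - 1) - 1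

/-- `k`-th order gap: the cyclic sum of `k` consecutive first-order gaps ending at `n`. -/
noncomputable def gapk (P q f : ℕ) (r : ℝ) (s : ℕ → ℝ) (n k : ℕ) : ℝ :=
  ∑ j ∈ Finset.range k, gap1 P q f r s ((n + k * P - k + 1 + j) % P)

/-- The explicit seed `s_n = n ((q+1+f-P+r)/P + 1)` realizes a cyclic execution:
every `f`-th order gap equals `f (w + r)/P` with `w = q + 1 + f - P`, hence lies in `[0,1)`. -/
theorem explicit_seed_gaps
    (P q f : ℕ) (r : ℝ)
    (hP : 1 ≤ P) (hr0 : 0 ≤ r) (hr1 : r < 1)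
    (hw : P ≤ q + 1 + f)
    (hfmax : (f : ℝ) * (((q : ℝ) + 1 + (f : ℝ) - (P : ℝ)) + r) < (P : ℝ)) :
    ∀ n < P,
      gapk P q f r
          (fun m => (m : ℝ) * (((q : ℝ) + 1 + (f : ℝ) - (P : ℝ) + r) / (P : ℝ) + 1)) n f
        = (f : ℝ) * (((q : ℝ) + 1 + (f : ℝ) - (P : ℝ)) + r) / (P : ℝ) ∧
      0 ≤ gapk P q f r
          (fun m => (m : ℝ) * (((q : ℝ) + 1 + (f : ℝ) - (P : ℝ) + r) / (P : ℝ) + 1)) n f ∧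
      gapk P q f r
          (fun m => (m : ℝ) * (((q : ℝ) + 1 + (f : ℝ) - (P : ℝ) + r) / (P : ℝ) + 1)) n f < 1 := by
  intro n hn
  have hPpos : (0:ℝ) < P := by exact_mod_cast hP
  have hPne : (P:ℝ) ≠ 0 := ne_of_gt hPpos
  set W : ℝ := (q : ℝ) + 1 + (f : ℝ) - (P : ℝ) + r with hW
  set s : ℕ → ℝ := fun m => (m : ℝ) * (W / (P : ℝ) + 1) with hs
  have hgap1 : ∀ m : ℕ, gap1 P q f r s m = W / P := by
    intro m
    rcases Nat.eq_zero_or_pos m with hm | hm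
    · subst hm
      simp only [gap1, if_pos rfl, hs, ↓reduceIte]
      have hP1 : ((P - 1 : ℕ) : ℝ) = (P : ℝ) - 1 := by
        have := Nat.cast_sub hP (R := ℝ); simpa using this
      rw [hP1]
      field_simp
      ring
    · have hm0 : m ≠ 0 := Nat.pos_iff_ne_zero.mp hm
      simp only [gap1, if_neg hm0, hs]
      have hm1 : ((m - 1 : ℕ) : ℝ) = (m : ℝ) - 1 := by
        have := Nat.cast_sub hm (R := ℝ); simpa using this
      rw [hm1]
      field_simp
      ring
  have hval : gapk P q f r s n f = (f : ℝ) * W / P := by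
    unfold gapk
    rw [Finset.sum_congr rfl (fun j _ => hgap1 _)]
    simp [Finset.sum_const, mul_div_assoc]
  have hWnn : 0 ≤ W := by
    have : (P:ℝ) ≤ (q:ℝ) + 1 + (f:ℝ) := by exact_mod_cast hw
    have : 0 ≤ (q : ℝ) + 1 + (f : ℝ) - (P : ℝ) := by linarith
    linarith
  have heq : (f : ℝ) * W / P = (f : ℝ) * (((q : ℝ) + 1 + (f : ℝ) - (P : ℝ)) + r) / (P : ℝ) := by
    rw [hW]
  refine ⟨by rw [hval, heq], ?_, ?_⟩
  · rw [hval]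
    positivity
  · rw [hval]
    rw [div_lt_one hPpos]
    have : (f : ℝ) * (((q : ℝ) + 1 + (f : ℝ) - (P : ℝ)) + r) = (f:ℝ) * W := by rw [hW]
    linarith [hfmax]
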